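/- Let X be a reflexive Banach space and let (P_i)_{i ∈ I} be a family of pairwise commuting contractive projections on X with ranges X_i = P_i(X). Then Y = ⋂_{i ∈ I} X_i is the range of a contractive projection on X. -/

import Mathlib

open Filter NormedSpace Metric Topology

/-- Corollary 4.2 (cor:2.2): in a reflexive Banach space, the intersection of
the ranges of a commuting family of contractive projections is the range of a
contractive projection. -/
theorem stmt5 {X : Type*} [NormedAddCommGroup X] [NormedSpace ℝ X]
    [CompleteSpace X]
    (hrefl : Function.Surjective (NormedSpace.inclusionInDoubleDual ℝ X))
    {I : Type*} (P : I → X →L[ℝ] X)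
    (hproj : ∀ i, (P i).comp (P i) = P i)
    (hcontr : ∀ i, ‖P i‖ ≤ 1)
    (hcomm : ∀ i j, (P i).comp (P j) = (P j).comp (P i)) :
    ∃ Q : X →L[ℝ] X, Q.comp Q = Q ∧ ‖Q‖ ≤ 1 ∧
      Set.range Q = ⋂ i, Set.range (P i) := by
  classical
  have hcomm' : ∀ i j, Commute (P i) (P j) := fun i j => hcomm i j
  set Qf : Finset I → (X →L[ℝ] X) :=
    fun F => F.noncommProd P (fun i _ j _ _ => hcomm' i j) with hQfdef
  have hQf_insert : ∀ (a : I) (s : Finset I), a ∉ s →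
      Qf (insert a s) = P a * Qf s := by
    intro a s ha
    simp only [hQfdef]
    exact Finset.noncommProd_insert_of_notMem _ _ _ _ ha
  have hQnorm : ∀ F, ‖Qf F‖ ≤ 1 := by
    intro F
    induction F using Finset.induction_on with
    | empty =>
      simp only [hQfdef, Finset.noncommProd_empty]
      exact ContinuousLinearMap.norm_id_le
    | @insert a s ha ih =>
      rw [hQf_insert a s ha]
      calc ‖P a * Qf s‖ ≤ ‖P a‖ * ‖Qf s‖ := norm_mul_le _ _
        _ ≤ 1 * 1 := mul_le_mul (hcontr a) ih (norm_nonneg _) zero_le_one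
        _ = 1 := one_mul 1
  have hfixQ : ∀ (F : Finset I) (x : X), (∀ i, P i x = x) → Qf F x = x := by
    intro F x hx
    induction F using Finset.induction_on with
    | empty => rw [show Qf ∅ = 1 from Finset.noncommProd_empty _ _]; rfl
    | @insert a s ha ih =>
      rw [hQf_insert a s ha, ContinuousLinearMap.mul_apply, ih, hx]
  have habs : ∀ (F : Finset I), ∀ i ∈ F, P i * Qf F = Qf F := by
    intro F
    induction F using Finset.induction_on with
    | empty => intro i hi; simp at hi
    | @insert a s ha ih =>
      intro i hi
      rcases Finset.mem_insert.mp hi with h | h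
      · subst h
        rw [hQf_insert i s ha, ← mul_assoc]
        congr 1
        exact hproj i
      · rw [hQf_insert a s ha, ← mul_assoc, (hcomm' i a).eq, mul_assoc, ih i h]
  -- the ultrafilter along which we take limits
  let 𝒰 : Ultrafilter (Finset I) := Ultrafilter.of atTop
  have h𝒰le : (𝒰 : Filter (Finset I)) ≤ atTop := Ultrafilter.of_le atTop
  set J := NormedSpace.inclusionInDoubleDual ℝ X with hJdef
  have hJnorm : ∀ z : X, ‖J z‖ = ‖z‖ := fun z =>
    (NormedSpace.inclusionInDoubleDualLi ℝ (E := X)).norm_map z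
  -- key: weak limits exist thanks to reflexivity
  have key : ∀ x : X, ∃ y : X, ‖y‖ ≤ ‖x‖ ∧
      ∀ f : StrongDual ℝ X, Tendsto (fun F => f (Qf F x)) (𝒰 : Filter (Finset I))
        (𝓝 (f y)) := by
    intro x
    set g : Finset I → WeakDual ℝ (StrongDual ℝ X) :=
      fun F => StrongDual.toWeakDual (J (Qf F x)) with hg
    have hmem : ∀ F, g F ∈ WeakDual.toStrongDual ⁻¹' closedBall 0 ‖x‖ := by
      intro F
      simp only [Set.mem_preimage, mem_closedBall_zero_iff]
      have : WeakDual.toStrongDual (g F) = J (Qf F x) := rfl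
      rw [this]; refine (mem_closedBall_zero_iff (E := StrongDual ℝ (StrongDual ℝ X))).mpr ?_; rw [hJnorm]
      calc ‖Qf F x‖ ≤ ‖Qf F‖ * ‖x‖ := (Qf F).le_opNorm x
        _ ≤ 1 * ‖x‖ := mul_le_mul_of_nonneg_right (hQnorm F) (norm_nonneg x)
        _ = ‖x‖ := one_mul _
    have hcpt := WeakDual.isCompact_closedBall (0 : StrongDual ℝ (StrongDual ℝ X)) ‖x‖
    have hle : (𝒰 : Filter (Finset I)).map g ≤
        𝓟 (WeakDual.toStrongDual ⁻¹' closedBall 0 ‖x‖) :=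
      le_principal_iff.mpr (Filter.mem_map.mpr (Eventually.of_forall hmem))
    obtain ⟨Ψ, hΨmem, hΨ⟩ := hcpt.ultrafilter_le_nhds (𝒰.map g) hle
    obtain ⟨y, hy⟩ := hrefl (WeakDual.toStrongDual Ψ)
    refine ⟨y, ?_, ?_⟩
    · rw [← hJnorm y, hy]
      simpa [mem_closedBall_zero_iff] using hΨmem
    · intro f
      have heval : Tendsto (fun F => (g F) f) (𝒰 : Filter (Finset I)) (𝓝 (Ψ f)) :=
        ((WeakDual.eval_continuous f).tendsto Ψ).comp hΨ
      have h1 : ∀ F, (g F) f = f (Qf F x) := fun F => rfl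
      have h2 : Ψ f = f y := by
        have : Ψ f = (WeakDual.toStrongDual Ψ) f := rfl
        rw [this, ← hy]
        rfl
      simpa [h1, h2] using heval
  choose T hTnorm htend using key
  -- T is linear
  have hadd : ∀ x z : X, T (x + z) = T x + T z := by
    intro x z
    rw [eq_iff_forall_dual_eq ℝ]
    intro f
    have h1 : Tendsto (fun F => f (Qf F (x + z))) (𝒰 : Filter (Finset I))
        (𝓝 (f (T x) + f (T z))) := by
      have := (htend x f).add (htend z f)
      simpa [map_add] using this
    have h2 := htend (x + z) f
    have := tendsto_nhds_unique h2 h1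
    rw [this, map_add]
  have hsmul : ∀ (c : ℝ) (x : X), T (c • x) = c • T x := by
    intro c x
    rw [eq_iff_forall_dual_eq ℝ]
    intro f
    have h1 : Tendsto (fun F => f (Qf F (c • x))) (𝒰 : Filter (Finset I))
        (𝓝 (c * f (T x))) := by
      have := (htend x f).const_mul c
      simpa [map_smul, smul_eq_mul] using this
    have h2 := htend (c • x) f
    have := tendsto_nhds_unique h2 h1
    rw [this, map_smul, smul_eq_mul]
  have hfixT : ∀ x : X, (∀ i, P i x = x) → T x = x := by
    intro x hx
    rw [eq_iff_forall_dual_eq ℝ]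
    intro f
    have h1 : Tendsto (fun F => f (Qf F x)) (𝒰 : Filter (Finset I)) (𝓝 (f x)) := by
      have : (fun F : Finset I => f (Qf F x)) = fun _ => f x := by
        funext F; rw [hfixQ F x hx]
      rw [this]; exact tendsto_const_nhds
    exact tendsto_nhds_unique (htend x f) h1
  have hmemT : ∀ (x : X) (i : I), P i (T x) = T x := by
    intro x i
    have : P i (T x) = T x ↔ ∀ g : StrongDual ℝ X, g (P i (T x)) = g (T x) :=
      eq_iff_forall_dual_eq ℝ
    rw [this]
    intro f
    have h1 : Tendsto (fun F => (f.comp (P i)) (Qf F x)) (𝒰 : Filter (Finset I))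
        (𝓝 ((f.comp (P i)) (T x))) := htend x (f.comp (P i))
    have hev : ∀ᶠ F in (𝒰 : Filter (Finset I)),
        (f.comp (P i)) (Qf F x) = f (Qf F x) := by
      apply h𝒰le
      filter_upwards [Filter.eventually_ge_atTop ({i} : Finset I)] with F hF
      have hiF : i ∈ F := hF (Finset.mem_singleton_self i)
      have h3 := congrArg (fun (A : X →L[ℝ] X) => A x) (habs F i hiF)
      simp only [ContinuousLinearMap.mul_apply] at h3
      simpa using congrArg f h3
    have h1' : Tendsto (fun F => f (Qf F x)) (𝒰 : Filter (Finset I))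
        (𝓝 (f (P i (T x)))) := by
      refine Tendsto.congr' ?_ h1
      exact hev
    exact tendsto_nhds_unique h1' (htend x f)
  -- assemble Q
  let Qlin : X →ₗ[ℝ] X :=
    { toFun := T
      map_add' := hadd
      map_smul' := hsmul }
  let Q : X →L[ℝ] X := Qlin.mkContinuous 1 (fun x => by
    simpa [Qlin] using hTnorm x)
  have hQapp : ∀ x, Q x = T x := fun x => rfl
  refine ⟨Q, ?_, ?_, ?_⟩
  · ext x
    simp only [ContinuousLinearMap.comp_apply, hQapp]
    exact hfixT (T x) (fun i => hmemT x i)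
  · exact Qlin.mkContinuous_norm_le zero_le_one _
  · ext x
    simp only [Set.mem_range, Set.mem_iInter]
    constructor
    · rintro ⟨z, rfl⟩
      intro i
      exact ⟨Q z, by rw [hQapp]; exact hmemT z i⟩
    · intro hx
      have hfix : ∀ i, P i x = x := by
        intro i
        obtain ⟨z, hz⟩ := hx i
        have := congrArg (fun (A : X →L[ℝ] X) => A z) (hproj i)
        simp only [ContinuousLinearMap.comp_apply] at this
        rw [← hz, this]
      exact ⟨x, by rw [hQapp]; exact hfixT x hfix⟩
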